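/- Let G be a tournament of order n with diameter 2, and suppose there is a constant 0 < ε < 1 with s(x,y) ≤ εn for all pairs of distinct vertices x, y, where s(x,y) = |{z : χ(x,z) = χ(y,z)}|. Then the metric dimension of G is at most max(−2/log₂ ε, 2) · log₂ n, for n sufficiently large: there exists a set W of k = ⌈max(−2/log₂ ε, 2) · log₂ n⌉ vertices such that for every pair x ≠ y some w ∈ W has d(w,x) ≠ d(w,y). -/

import Mathlib

/-- A directed walk of length `n` from `u` to `v` along the arc relation `A`. -/
def IsDWalk {V : Type*} (A : V → V → Prop) {n : ℕ} (f : Fin (n + 1) → V) (u v : V) : Prop :=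
  f 0 = u ∧ f (Fin.last n) = v ∧ ∀ i : Fin n, A (f i.castSucc) (f i.succ)

/-- Directed distance: the length of a shortest directed path from `u` to `v`,
`⊤` (infinity) if there is no directed path. -/
noncomputable def ddist {V : Type*} (A : V → V → Prop) (u v : V) : ℕ∞ :=
  sInf {m : ℕ∞ | ∃ (n : ℕ) (f : Fin (n + 1) → V), IsDWalk A f u v ∧ m = (n : ℕ∞)}

lemma ddist_self {V : Type*} (A : V → V → Prop) (u : V) : ddist A u u = 0 := by
  refine le_antisymm (sInf_le ⟨0, fun _ => u, ⟨rfl, rfl, fun i => i.elim0⟩, by simp⟩) zero_le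

lemma one_le_ddist {V : Type*} {A : V → V → Prop} {u v : V} (h : u ≠ v) :
    1 ≤ ddist A u v := by
  refine le_sInf ?_
  rintro m ⟨nn, f, ⟨h0, hl, _⟩, rfl⟩
  match nn with
  | 0 =>
    exact absurd (h0.symm.trans (by simpa using hl)) h
  | (nn+1) => exact_mod_cast Nat.succ_le_succ (Nat.zero_le _)

lemma two_le_ddist {V : Type*} {A : V → V → Prop} {u v : V} (h : u ≠ v) (hA : ¬ A u v) :
    2 ≤ ddist A u v := by
  refine le_sInf ?_
  rintro m ⟨nn, f, ⟨h0, hl, hstep⟩, rfl⟩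
  match nn with
  | 0 =>
    exact absurd (h0.symm.trans (by simpa using hl)) h
  | 1 =>
    exfalso
    have := hstep 0
    rw [show (Fin.castSucc (0 : Fin 1)) = 0 from rfl, show (Fin.succ (0 : Fin 1)) = Fin.last 1 from rfl,
      h0, hl] at this
    exact hA this
  | (nn+2) => exact_mod_cast Nat.succ_le_succ (Nat.succ_le_succ (Nat.zero_le _))

lemma ddist_eq_one {V : Type*} {A : V → V → Prop} {u v : V} (h : u ≠ v) (hA : A u v) :
    ddist A u v = 1 := by
  refine le_antisymm (sInf_le ⟨1, fun i => if i = 0 then u else v, ⟨if_pos rfl, ?_, ?_⟩, by simp⟩)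
    (one_le_ddist h)
  · show (if (Fin.last 1) = 0 then u else v) = v
    rw [if_neg (by decide)]
  · intro i
    rw [Fin.fin_one_eq_zero i]
    show A (if (0 : Fin 2) = 0 then u else v) (if (1 : Fin 2) = 0 then u else v)
    rw [if_pos rfl, if_neg (by decide)]
    exact hA


/-- Let `0 < ε < 1` be a constant. For `n` sufficiently large: if `G` is a tournament of
order `n` with diameter 2 such that the sameness set of every pair of distinct vertices
has size at most `ε * n`, then the metric dimension of `G` is at most
`max(-2 / log₂ ε, 2) · log₂ n`: some set `W` of at most `⌈max(-2 / log₂ ε, 2) · log₂ n⌉`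
vertices resolves every pair. -/
theorem quasirandom_tournament_metric_dim (ε : ℝ) (hε0 : 0 < ε) (hε1 : ε < 1) :
    ∃ n₀ : ℕ, ∀ n : ℕ, n₀ ≤ n → ∀ (V : Type) [Fintype V], Fintype.card V = n →
      ∀ A : V → V → Prop, Irreflexive A →
        (∀ x y : V, x ≠ y → Xor' (A x y) (A y x)) →
        (∀ u v : V, u ≠ v → ddist A u v ≤ 2) →
        (∀ x y : V, x ≠ y → (Nat.card {z : V // A x z ↔ A y z} : ℝ) ≤ ε * n) →
        ∃ W : Finset V,
          W.card ≤ ⌈max (-2 / Real.logb 2 ε) 2 * Real.logb 2 (n : ℝ)⌉₊ ∧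
          ∀ x y : V, x ≠ y → ∃ w ∈ W, ddist A w x ≠ ddist A w y := by
  classical
  refine ⟨2, fun n hn V _ hcard A hirr htour _hdiam hsame => ?_⟩
  set L := Real.logb 2 ε with hLdef
  have hLneg : L < 0 := Real.logb_neg (by norm_num : (1:ℝ) < 2) hε0 hε1
  set c := max (-2 / L) 2 with hcdef
  set k := ⌈c * Real.logb 2 (n : ℝ)⌉₊ with hkdef
  have hn1 : (1 : ℝ) ≤ (n : ℝ) := by exact_mod_cast Nat.one_le_of_lt hn
  have hnpos : (0 : ℝ) < (n : ℝ) := lt_of_lt_of_le one_pos hn1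
  have hlogn : 0 ≤ Real.logb 2 (n : ℝ) := Real.logb_nonneg one_lt_two hn1
  -- key numeric inequality
  have hkt : (-2 / L) * Real.logb 2 (n : ℝ) ≤ (k : ℝ) :=
    le_trans (mul_le_mul_of_nonneg_right (le_max_left _ _) hlogn) (Nat.le_ceil _)
  have hεrw : ε = (2 : ℝ) ^ L := (Real.rpow_logb two_pos (by norm_num) hε0).symm
  have h4 : ε ^ ((-2 / L) * Real.logb 2 (n : ℝ)) = (n : ℝ) ^ (-2 : ℝ) := by
    have hL0 : L ≠ 0 := ne_of_lt hLneg
    rw [hεrw, ← Real.rpow_mul (by norm_num : (0:ℝ) ≤ 2),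
      show L * (-2 / L * Real.logb 2 (n : ℝ)) = Real.logb 2 (n : ℝ) * (-2) by
        field_simp,
      Real.rpow_mul (by norm_num : (0:ℝ) ≤ 2), Real.rpow_logb two_pos (by norm_num) hnpos]
  have key : (n : ℝ) ^ 2 * ε ^ k ≤ 1 := by
    have h3 : ε ^ (k : ℝ) ≤ ε ^ ((-2 / L) * Real.logb 2 (n : ℝ)) :=
      Real.rpow_le_rpow_of_exponent_ge hε0 hε1.le hkt
    rw [h4] at h3
    have h5 : ε ^ k ≤ (n : ℝ) ^ (-2 : ℝ) := by rwa [Real.rpow_natCast] at h3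
    calc (n : ℝ) ^ 2 * ε ^ k ≤ (n : ℝ) ^ (2:ℝ) * (n : ℝ) ^ (-2 : ℝ) := by
          rw [Real.rpow_two]
          exact mul_le_mul_of_nonneg_left h5 (by positivity)
      _ = 1 := by
          rw [← Real.rpow_add hnpos]; norm_num
  -- the sameness sets
  set S : V → V → Finset V := fun x y => Finset.univ.filter (fun z => A x z ↔ A y z) with hSdef
  have hS : ∀ x y : V, x ≠ y → ((S x y).card : ℝ) ≤ ε * n := by
    intro x y hxy
    have h := hsame x y hxy
    rwa [Nat.card_eq_fintype_card, Fintype.card_subtype] at h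
  -- counting bad tuples
  set bad : Finset (Fin k → V) :=
    (Finset.univ.offDiag : Finset (V × V)).biUnion
      (fun p => Fintype.piFinset (fun _ : Fin k => S p.1 p.2)) with hbaddef
  have hbadcard : (bad.card : ℝ) < (n : ℝ) ^ k := by
    have step1 : (bad.card : ℝ) ≤
        ∑ p ∈ Finset.univ.offDiag, (((Fintype.piFinset fun _ : Fin k => S p.1 p.2).card : ℕ) : ℝ) := by
      exact_mod_cast Finset.card_biUnion_le
    have step2 : ∀ p ∈ (Finset.univ.offDiag : Finset (V × V)),
        (((Fintype.piFinset fun _ : Fin k => S p.1 p.2).card : ℕ) : ℝ) ≤ (ε * n) ^ k := by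
      intro p hp
      rw [Fintype.card_piFinset]
      simp only [Finset.prod_const, Finset.card_univ, Fintype.card_fin]
      push_cast
      exact pow_le_pow_left₀ (Nat.cast_nonneg _) (hS p.1 p.2 (Finset.mem_offDiag.mp hp).2.2) k
    have step3 : ((Finset.univ.offDiag : Finset (V × V)).card : ℝ) < (n : ℝ) ^ 2 := by
      rw [Finset.offDiag_card, Finset.card_univ, hcard]
      have h1 : n ≤ n * n := Nat.le_mul_of_pos_left n (by omega)
      rw [Nat.cast_sub h1]
      push_cast
      nlinarith
    calc (bad.card : ℝ) ≤ ∑ _p ∈ Finset.univ.offDiag, (ε * (n:ℝ)) ^ k :=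
          le_trans step1 (Finset.sum_le_sum step2)
      _ = ((Finset.univ.offDiag : Finset (V × V)).card : ℝ) * (ε * n) ^ k := by
          rw [Finset.sum_const, nsmul_eq_mul]
      _ < (n : ℝ) ^ 2 * (ε * n) ^ k := mul_lt_mul_of_pos_right step3 (by positivity)
      _ = ((n : ℝ) ^ 2 * ε ^ k) * (n : ℝ) ^ k := by rw [mul_pow]; ring
      _ ≤ 1 * (n : ℝ) ^ k := mul_le_mul_of_nonneg_right key (by positivity)
      _ = (n : ℝ) ^ k := one_mul _
  obtain ⟨f, hf⟩ : ∃ f : Fin k → V, f ∉ bad := by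
    by_contra h
    push_neg at h
    have hsub : (Finset.univ : Finset (Fin k → V)) ⊆ bad := fun f _ => h f
    have := Finset.card_le_card hsub
    rw [Finset.card_univ, Fintype.card_fun, hcard, Fintype.card_fin] at this
    have : ((n : ℝ) ^ k : ℝ) ≤ (bad.card : ℝ) := by exact_mod_cast this
    linarith
  refine ⟨Finset.image f Finset.univ, ?_, ?_⟩
  · exact le_trans Finset.card_image_le (by simp)
  · intro x y hxy
    have hxy' : (x, y) ∈ (Finset.univ.offDiag : Finset (V × V)) := by
      simp [Finset.mem_offDiag, hxy]
    have hex : ∃ i, f i ∉ S x y := by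
      by_contra h
      push_neg at h
      exact hf (Finset.mem_biUnion.mpr ⟨(x, y), hxy', Fintype.mem_piFinset.mpr h⟩)
    obtain ⟨i, hi⟩ := hex
    have hw : ¬(A x (f i) ↔ A y (f i)) := by
      simpa [hSdef] using hi
    refine ⟨f i, Finset.mem_image_of_mem f (Finset.mem_univ i), ?_⟩
    set w := f i with hwdef
    by_cases hwx : w = x
    · subst hwx
      rw [ddist_self]
      intro h0
      have := one_le_ddist (A := A) hxy
      rw [← h0] at this
      exact absurd this (by norm_num)
    by_cases hwy : w = y
    · subst hwy
      rw [ddist_self]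
      intro h0
      have := one_le_ddist (A := A) (Ne.symm hxy)
      rw [h0] at this
      exact absurd this (by norm_num)
    · have hxw : x ≠ w := fun h => hwx h.symm
      have hyw : y ≠ w := fun h => hwy h.symm
      by_cases hAxw : A x w
      · have hAyw : ¬ A y w := fun h => hw ⟨fun _ => h, fun _ => hAxw⟩
        have hAwx : ¬ A w x := by
          rcases htour x w hxw with ⟨_, h2⟩ | ⟨_, h2⟩
          · exact h2
          · exact absurd hAxw h2
        have hAwy : A w y := by
          rcases htour y w hyw with ⟨h1, _⟩ | ⟨h1, _⟩
          · exact absurd h1 hAyw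
          · exact h1
        rw [ddist_eq_one hwy hAwy]
        intro h0
        have := two_le_ddist hwx hAwx
        rw [h0] at this
        exact absurd this (by norm_num)
      · have hAyw : A y w := by
          by_contra h
          exact hw ⟨fun h1 => absurd h1 hAxw, fun h1 => absurd h1 h⟩
        have hAwx : A w x := by
          rcases htour x w hxw with ⟨h1, _⟩ | ⟨h1, _⟩
          · exact absurd h1 hAxw
          · exact h1
        have hAwy : ¬ A w y := by
          rcases htour y w hyw with ⟨_, h2⟩ | ⟨_, h2⟩
          · exact h2
          · exact absurd hAyw h2
        rw [ddist_eq_one hwx hAwx]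
        intro h0
        have := two_le_ddist hwy hAwy
        rw [← h0] at this
        exact absurd this (by norm_num)
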